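/- arXiv:2107.00539 — 5 statements merged into one kernel-verified Lean document; each statement's English description precedes it below -/
import Mathlib

section
/- For every a > 0, (∫_{|y| > a} |(f ⋆ π)(y)|² dy)^{1/2} ≤ (∫_{|u| > a/2} |f(u)|² du)^{1/2} + ‖f‖_{L²(ℝ)} · ∫_{|x| > a/2} π(x) dx. -/
open MeasureTheory Real Set

open scoped ENNReal

private lemma ofReal_sq_eq (t : ℝ) :
    ENNReal.ofReal (t ^ 2) = (‖t‖₊ : ℝ≥0∞) ^ (2 : ℝ) := by
  rw [← sq_abs, ENNReal.ofReal_pow (abs_nonneg t), ← Real.enorm_eq_ofReal_abs, enorm_eq_nnnorm]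
  rw [show (2 : ℝ) = ((2 : ℕ) : ℝ) by norm_num, ENNReal.rpow_natCast]

/-- Cauchy–Schwarz step for `ℝ≥0∞`-valued integrals against a weight. -/
private lemma cs_step {μ : Measure ℝ} {F q : ℝ → ℝ≥0∞}
    (hF : AEMeasurable F μ) (hq : AEMeasurable q μ) :
    (∫⁻ x, F x * q x ∂μ) ^ (2 : ℝ)
      ≤ (∫⁻ x, q x ∂μ) * ∫⁻ x, F x ^ (2 : ℝ) * q x ∂μ := by
  have hpq : Real.HolderConjugate 2 2 := Real.HolderConjugate.two_two
  have h := ENNReal.lintegral_mul_le_Lp_mul_Lq μ hpq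
    (f := fun x => F x * q x ^ (1/2 : ℝ)) (g := fun x => q x ^ (1/2 : ℝ))
    ((hF.mul (hq.pow_const _))) (hq.pow_const _)
  have heq : ∀ x, (F x * q x ^ (1/2 : ℝ)) * q x ^ (1/2 : ℝ) = F x * q x := by
    intro x
    rw [mul_assoc, ← ENNReal.rpow_add_of_nonneg _ _ (by norm_num) (by norm_num)]
    norm_num
  have h2 : ∀ x, (F x * q x ^ (1/2 : ℝ)) ^ (2 : ℝ) = F x ^ (2 : ℝ) * q x := by
    intro x
    rw [ENNReal.mul_rpow_of_nonneg _ _ (by norm_num : (0:ℝ) ≤ 2), ← ENNReal.rpow_mul]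
    norm_num
  have h3 : ∀ x, (q x ^ (1/2 : ℝ)) ^ (2 : ℝ) = q x := by
    intro x
    rw [← ENNReal.rpow_mul]
    norm_num
  simp_rw [Pi.mul_apply, heq, h2, h3] at h
  calc (∫⁻ x, F x * q x ∂μ) ^ (2 : ℝ)
      ≤ ((∫⁻ x, F x ^ (2:ℝ) * q x ∂μ) ^ (1/2 : ℝ) * (∫⁻ x, q x ∂μ) ^ (1/2 : ℝ)) ^ (2:ℝ) :=
        ENNReal.rpow_le_rpow h (by norm_num)
    _ = (∫⁻ x, q x ∂μ) * ∫⁻ x, F x ^ (2 : ℝ) * q x ∂μ := by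
        rw [ENNReal.mul_rpow_of_nonneg _ _ (by norm_num : (0:ℝ) ≤ 2), ← ENNReal.rpow_mul,
          ← ENNReal.rpow_mul, show (1/2 : ℝ) * 2 = 1 by norm_num, ENNReal.rpow_one,
          ENNReal.rpow_one, mul_comm]

private lemma aux_main
    (f : ℝ → ℝ) (hfm : Measurable f) (hf2 : MemLp f 2 volume)
    (p : ℝ → ℝ) (hpmeas : Measurable p) (hpnonneg : ∀ x, 0 ≤ p x)
    (hpint : ∫ x, p x = 1) (a : ℝ) (ha : 0 < a) :
    Real.sqrt (∫ y in {y : ℝ | a < |y|}, (∫ x, f (y - x) * p x) ^ 2)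
        ≤ Real.sqrt (∫ u in {u : ℝ | a / 2 < |u|}, (f u) ^ 2)
          + Real.sqrt (∫ y, (f y) ^ 2) * ∫ x in {x : ℝ | a / 2 < |x|}, p x := by
  set S : Set ℝ := {y : ℝ | a < |y|} with hSdef
  set T : Set ℝ := {x : ℝ | a / 2 < |x|} with hTdef
  have hS : MeasurableSet S := (isOpen_lt continuous_const continuous_abs).measurableSet
  have hT : MeasurableSet T := (isOpen_lt continuous_const continuous_abs).measurableSet
  set q : ℝ → ℝ≥0∞ := fun x => (‖p x‖₊ : ℝ≥0∞) with hqdef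
  set F : ℝ → ℝ≥0∞ := fun u => (‖f u‖₊ : ℝ≥0∞) with hFdef
  have hq : Measurable q := hpmeas.nnnorm.coe_nnreal_ennreal
  have hF : Measurable F := hfm.nnnorm.coe_nnreal_ennreal
  have hqp : ∀ x, ENNReal.ofReal (p x) = q x := fun x => by
    simp only [hqdef, ← enorm_eq_nnnorm, Real.enorm_eq_ofReal_abs, abs_of_nonneg (hpnonneg x)]
  -- p is integrable
  have hpInt : Integrable p := by
    by_contra h
    rw [integral_undef h] at hpint
    norm_num at hpint
  have hq1 : ∫⁻ x, q x = 1 := by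
    have := (ofReal_integral_eq_lintegral_ofReal hpInt (Filter.Eventually.of_forall hpnonneg)).symm
    simp_rw [hqp, hpint, ENNReal.ofReal_one] at this
    exact this
  set ε : ℝ≥0∞ := ∫⁻ x in T, q x with hεdef
  have hε1 : ε ≤ 1 := le_trans (setLIntegral_le_lintegral _ _) hq1.le
  have hεc1 : (∫⁻ x in Tᶜ, q x) ≤ 1 := le_trans (setLIntegral_le_lintegral _ _) hq1.le
  -- L² quantities
  set B2 : ℝ≥0∞ := ∫⁻ y, F y ^ (2 : ℝ) with hB2def
  have hB2 : B2 ≠ ⊤ := by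
    have h2 := hf2.2
    rw [eLpNorm_eq_lintegral_rpow_enorm_toReal (two_ne_zero) (ENNReal.ofNat_ne_top)] at h2
    simp only [ENNReal.toReal_ofNat, enorm_eq_nnnorm] at h2
    intro htop
    rw [hB2def] at htop
    rw [htop] at h2
    simp [ENNReal.top_rpow_of_pos (by norm_num : (0:ℝ) < 1/2)] at h2
  set A2 : ℝ≥0∞ := ∫⁻ u in T, F u ^ (2 : ℝ) with hA2def
  have hA2B2 : A2 ≤ B2 := setLIntegral_le_lintegral _ _
  have hA2 : A2 ≠ ⊤ := fun h => hB2 (top_le_iff.mp (h ▸ hA2B2))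
  -- the two pieces of the convolution
  set Φ₁ : ℝ → ℝ≥0∞ := fun y => ∫⁻ x in Tᶜ, F (y - x) * q x with hΦ₁def
  set Φ₂ : ℝ → ℝ≥0∞ := fun y => ∫⁻ x in T, F (y - x) * q x with hΦ₂def
  have hFq : Measurable fun z : ℝ × ℝ => F (z.1 - z.2) * q z.2 :=
    (hF.comp (measurable_fst.sub measurable_snd)).mul (hq.comp measurable_snd)
  have hFq2 : Measurable fun z : ℝ × ℝ => F (z.1 - z.2) ^ (2:ℝ) * q z.2 :=
    ((hF.comp (measurable_fst.sub measurable_snd)).pow_const _).mul (hq.comp measurable_snd)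
  have hΦ₁ : Measurable Φ₁ := hFq.lintegral_prod_right'
  have hΦ₂ : Measurable Φ₂ := hFq.lintegral_prod_right'
  set c : ℝ → ℝ := fun y => ∫ x, f (y - x) * p x with hcdef
  have hc : StronglyMeasurable c :=
    (((hfm.comp (measurable_fst.sub measurable_snd)).mul
      (hpmeas.comp measurable_snd)).stronglyMeasurable).integral_prod_right'
  -- pointwise bound
  have hkey : ∀ y, (‖c y‖₊ : ℝ≥0∞) ≤ Φ₁ y + Φ₂ y := by
    intro y
    calc (‖c y‖₊ : ℝ≥0∞) ≤ ∫⁻ x, (‖f (y - x) * p x‖₊ : ℝ≥0∞) :=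
          enorm_integral_le_lintegral_enorm _
      _ = ∫⁻ x, F (y - x) * q x := by simp [nnnorm_mul, ENNReal.coe_mul, hFdef, hqdef]
      _ = Φ₂ y + Φ₁ y := (lintegral_add_compl _ hT).symm
      _ = Φ₁ y + Φ₂ y := add_comm _ _
  -- bound for Φ₂
  have hΦ₂bound : (∫⁻ y in S, Φ₂ y ^ (2:ℝ)) ≤ ε * (ε * B2) := by
    have hcs : ∀ y, Φ₂ y ^ (2:ℝ) ≤ ε * ∫⁻ x in T, F (y - x) ^ (2:ℝ) * q x := fun y =>
      cs_step ((hF.comp (measurable_const.sub measurable_id)).aemeasurable) hq.aemeasurable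
    calc (∫⁻ y in S, Φ₂ y ^ (2:ℝ))
        ≤ ∫⁻ y in S, ε * ∫⁻ x in T, F (y - x) ^ (2:ℝ) * q x := lintegral_mono hcs
      _ = ε * ∫⁻ y in S, ∫⁻ x in T, F (y - x) ^ (2:ℝ) * q x :=
          lintegral_const_mul _ hFq2.lintegral_prod_right'
      _ ≤ ε * ∫⁻ y, ∫⁻ x in T, F (y - x) ^ (2:ℝ) * q x :=
          mul_le_mul_right (setLIntegral_le_lintegral _ _) _
      _ = ε * ∫⁻ x in T, ∫⁻ y, F (y - x) ^ (2:ℝ) * q x := by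
          rw [lintegral_lintegral_swap hFq2.aemeasurable]
      _ = ε * ∫⁻ x in T, q x * B2 := by
          congr 1
          refine lintegral_congr fun x => ?_
          rw [lintegral_mul_const' (q x) _ ENNReal.coe_ne_top, mul_comm]
          congr 1
          exact lintegral_sub_right_eq_self (fun u => F u ^ (2:ℝ)) x
      _ = ε * (ε * B2) := by rw [lintegral_mul_const _ hq]
  -- bound for Φ₁
  have hΦ₁bound : (∫⁻ y in S, Φ₁ y ^ (2:ℝ)) ≤ A2 := by
    have hcs : ∀ y, Φ₁ y ^ (2:ℝ) ≤ (∫⁻ x in Tᶜ, q x) * ∫⁻ x in Tᶜ, F (y - x) ^ (2:ℝ) * q x :=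
      fun y =>
      cs_step ((hF.comp (measurable_const.sub measurable_id)).aemeasurable) hq.aemeasurable
    have hswap : (∫⁻ y in S, ∫⁻ x in Tᶜ, F (y - x) ^ (2:ℝ) * q x)
        = ∫⁻ x in Tᶜ, ∫⁻ y in S, F (y - x) ^ (2:ℝ) * q x := by
      rw [lintegral_lintegral_swap hFq2.aemeasurable]
    have hinner : ∀ x ∈ Tᶜ, (∫⁻ y in S, F (y - x) ^ (2:ℝ) * q x) ≤ q x * A2 := by
      intro x hx
      rw [lintegral_mul_const' (q x) _ ENNReal.coe_ne_top, mul_comm]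
      refine mul_le_mul_right ?_ _
      have hxle : |x| ≤ a / 2 := not_lt.mp hx
      calc (∫⁻ y in S, F (y - x) ^ (2:ℝ))
          ≤ ∫⁻ y in S, T.indicator (fun u => F u ^ (2:ℝ)) (y - x) := by
            refine setLIntegral_mono' hS fun y hy => ?_
            have hyx : y - x ∈ T := by
              rw [hTdef]
              simp only [mem_setOf_eq]
              have : a < |y| := hy
              calc a / 2 = a - a / 2 := by ring
                _ < |y| - |x| := by
                    have := hxle
                    linarith
                _ ≤ |y - x| := abs_sub_abs_le_abs_sub y x
            rw [indicator_of_mem hyx]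
        _ ≤ ∫⁻ y, T.indicator (fun u => F u ^ (2:ℝ)) (y - x) := setLIntegral_le_lintegral _ _
        _ = ∫⁻ u, T.indicator (fun u => F u ^ (2:ℝ)) u :=
            lintegral_sub_right_eq_self (T.indicator (fun u => F u ^ (2:ℝ))) x
        _ = A2 := lintegral_indicator hT _
    calc (∫⁻ y in S, Φ₁ y ^ (2:ℝ))
        ≤ ∫⁻ y in S, (∫⁻ x in Tᶜ, q x) * ∫⁻ x in Tᶜ, F (y - x) ^ (2:ℝ) * q x :=
          lintegral_mono hcs
      _ = (∫⁻ x in Tᶜ, q x) * ∫⁻ y in S, ∫⁻ x in Tᶜ, F (y - x) ^ (2:ℝ) * q x :=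
          lintegral_const_mul _ hFq2.lintegral_prod_right'
      _ ≤ 1 * ∫⁻ y in S, ∫⁻ x in Tᶜ, F (y - x) ^ (2:ℝ) * q x := mul_le_mul_left hεc1 _
      _ = ∫⁻ x in Tᶜ, ∫⁻ y in S, F (y - x) ^ (2:ℝ) * q x := by rw [one_mul, hswap]
      _ ≤ ∫⁻ x in Tᶜ, q x * A2 := setLIntegral_mono' hT.compl hinner
      _ = (∫⁻ x in Tᶜ, q x) * A2 := lintegral_mul_const _ hq
      _ ≤ 1 * A2 := mul_le_mul_left hεc1 _
      _ = A2 := one_mul _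
  -- Minkowski
  set A : ℝ≥0∞ := A2 ^ (1/2 : ℝ) with hAdef
  set B : ℝ≥0∞ := B2 ^ (1/2 : ℝ) with hBdef
  have hmain : (∫⁻ y in S, (‖c y‖₊ : ℝ≥0∞) ^ (2:ℝ)) ^ (1/2 : ℝ) ≤ A + ε * B := by
    have hmono : (∫⁻ y in S, (‖c y‖₊ : ℝ≥0∞) ^ (2:ℝ))
        ≤ ∫⁻ y in S, (Φ₁ y + Φ₂ y) ^ (2:ℝ) :=
      lintegral_mono fun y => ENNReal.rpow_le_rpow (hkey y) (by norm_num)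
    have hmink := ENNReal.lintegral_Lp_add_le
      (μ := volume.restrict S) hΦ₁.aemeasurable hΦ₂.aemeasurable one_le_two
    calc (∫⁻ y in S, (‖c y‖₊ : ℝ≥0∞) ^ (2:ℝ)) ^ (1/2 : ℝ)
        ≤ (∫⁻ y in S, (Φ₁ y + Φ₂ y) ^ (2:ℝ)) ^ (1/2 : ℝ) :=
          ENNReal.rpow_le_rpow hmono (by norm_num)
      _ ≤ (∫⁻ y in S, Φ₁ y ^ (2:ℝ)) ^ (1/2 : ℝ) + (∫⁻ y in S, Φ₂ y ^ (2:ℝ)) ^ (1/2 : ℝ) := hmink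
      _ ≤ A2 ^ (1/2 : ℝ) + (ε * (ε * B2)) ^ (1/2 : ℝ) :=
          add_le_add (ENNReal.rpow_le_rpow hΦ₁bound (by norm_num))
            (ENNReal.rpow_le_rpow hΦ₂bound (by norm_num))
      _ = A + ε * B := by
          congr 1
          rw [← mul_assoc, ← sq, hBdef, ENNReal.mul_rpow_of_nonneg _ _ (by norm_num : (0:ℝ) ≤ 1/2),
            ← ENNReal.rpow_natCast ε 2, ← ENNReal.rpow_mul]
          norm_num
  -- convert to real integrals
  have hAne : A ≠ ⊤ := (ENNReal.rpow_lt_top_of_nonneg (by norm_num) hA2).ne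
  have hBne : B ≠ ⊤ := (ENNReal.rpow_lt_top_of_nonneg (by norm_num) hB2).ne
  have hεne : ε ≠ ⊤ := (lt_of_le_of_lt hε1 ENNReal.one_lt_top).ne
  have h1 : ∫ y in S, (c y) ^ 2 = (∫⁻ y in S, (‖c y‖₊ : ℝ≥0∞) ^ (2:ℝ)).toReal := by
    rw [integral_eq_lintegral_of_nonneg_ae (Filter.Eventually.of_forall fun y => sq_nonneg (c y))
      ((hc.pow 2).aestronglyMeasurable)]
    congr 1
    exact lintegral_congr fun y => ofReal_sq_eq (c y)
  have h2 : ∫ u in T, (f u) ^ 2 = A2.toReal := by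
    rw [integral_eq_lintegral_of_nonneg_ae (Filter.Eventually.of_forall fun u => sq_nonneg (f u))
      ((hfm.stronglyMeasurable.pow 2).aestronglyMeasurable)]
    congr 1
    exact lintegral_congr fun u => ofReal_sq_eq (f u)
  have h3 : ∫ y, (f y) ^ 2 = B2.toReal := by
    rw [integral_eq_lintegral_of_nonneg_ae (Filter.Eventually.of_forall fun y => sq_nonneg (f y))
      ((hfm.stronglyMeasurable.pow 2).aestronglyMeasurable)]
    congr 1
    exact lintegral_congr fun y => ofReal_sq_eq (f y)
  have h4 : ∫ x in T, p x = ε.toReal := by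
    rw [integral_eq_lintegral_of_nonneg_ae (Filter.Eventually.of_forall hpnonneg)
      hpmeas.stronglyMeasurable.aestronglyMeasurable]
    congr 1
    exact lintegral_congr fun x => hqp x
  rw [h1, h2, h3, h4]
  rw [Real.sqrt_eq_rpow, Real.sqrt_eq_rpow, Real.sqrt_eq_rpow, ENNReal.toReal_rpow,
    ENNReal.toReal_rpow, ENNReal.toReal_rpow]
  calc ((∫⁻ y in S, (‖c y‖₊ : ℝ≥0∞) ^ (2:ℝ)) ^ (1/2 : ℝ)).toReal
      ≤ (A + ε * B).toReal :=
        ENNReal.toReal_mono (ENNReal.add_ne_top.mpr ⟨hAne, ENNReal.mul_ne_top hεne hBne⟩) hmain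
    _ = A.toReal + ε.toReal * B.toReal := by
        rw [ENNReal.toReal_add hAne (ENNReal.mul_ne_top hεne hBne), ENNReal.toReal_mul]
    _ = A.toReal + B.toReal * ε.toReal := by ring

theorem convolution_tail_L2_bound
    (f : ℝ → ℝ) (hf1 : Integrable f) (hf2 : MemLp f 2 volume)
    (p : ℝ → ℝ) (hpmeas : Measurable p) (hpnonneg : ∀ x, 0 ≤ p x)
    (hpint : ∫ x, p x = 1) :
    ∀ a : ℝ, 0 < a →
      Real.sqrt (∫ y in {y : ℝ | a < |y|}, (∫ x, f (y - x) * p x) ^ 2)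
        ≤ Real.sqrt (∫ u in {u : ℝ | a / 2 < |u|}, (f u) ^ 2)
          + Real.sqrt (∫ y, (f y) ^ 2) * ∫ x in {x : ℝ | a / 2 < |x|}, p x := by
  intro a ha
  set f' : ℝ → ℝ := hf1.1.mk f with hf'def
  have hfm' : Measurable f' := hf1.1.stronglyMeasurable_mk.measurable
  have hfe : f =ᵐ[volume] f' := hf1.1.ae_eq_mk
  have hf2' : MemLp f' 2 volume := hf2.ae_eq hfe
  have hconv : ∀ y : ℝ, (∫ x, f (y - x) * p x) = ∫ x, f' (y - x) * p x := by
    intro y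
    refine integral_congr_ae ?_
    have h := (Measure.measurePreserving_sub_left (volume : Measure ℝ) y).quasiMeasurePreserving.ae_eq_comp
      hfe
    filter_upwards [h] with x hx
    simp only [Function.comp_apply] at hx
    rw [hx]
  have hsq : (fun u => (f u) ^ 2) =ᵐ[volume] fun u => (f' u) ^ 2 :=
    hfe.mono fun x hx => by simp only []; rw [hx]
  have h2 : ∫ u in {u : ℝ | a / 2 < |u|}, (f u) ^ 2 = ∫ u in {u : ℝ | a / 2 < |u|}, (f' u) ^ 2 :=
    integral_congr_ae (ae_restrict_of_ae hsq)
  have h3 : ∫ y, (f y) ^ 2 = ∫ y, (f' y) ^ 2 := integral_congr_ae hsq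
  simp_rw [hconv, h2, h3]
  exact aux_main f' hfm' hf2' p hpmeas hpnonneg hpint a ha
end

section
/- For every natural number k, Σ_{j=0}^{k} binom(2k, 2j) · (2j − 1)!! · (2(k − j) − 1)!! = (2k)! / k!, where (2j−1)!! denotes the double factorial (with (−1)!! = 1). -/
open Finset Nat

lemma two_mul_factorial_eq (j : ℕ) :
    (2 * j).factorial = 2 ^ j * j.factorial * Nat.doubleFactorial (2 * j - 1) := by
  cases j with
  | zero => simp [Nat.doubleFactorial]
  | succ j =>
    have h : 2 * (j + 1) = (2 * j + 1) + 1 := by ring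
    rw [h, Nat.factorial_eq_mul_doubleFactorial]
    have h2 : 2 * j + 1 + 1 = 2 * (j + 1) := by ring
    rw [h2, Nat.doubleFactorial_two_mul]
    congr 1

lemma key (k j : ℕ) (hj : j ≤ k) :
    Nat.choose (2 * k) (2 * j) * Nat.doubleFactorial (2 * j - 1)
        * Nat.doubleFactorial (2 * (k - j) - 1) * (2 ^ k * k.factorial)
      = Nat.choose k j * (2 * k).factorial := by
  have h1 := Nat.choose_mul_factorial_mul_factorial (by omega : 2 * j ≤ 2 * k)
  have h2 := Nat.choose_mul_factorial_mul_factorial hj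
  have e1 := two_mul_factorial_eq j
  have e2 := two_mul_factorial_eq (k - j)
  have hk : 2 ^ k = 2 ^ j * 2 ^ (k - j) := by rw [← pow_add]; congr 1; omega
  have hsub : 2 * k - 2 * j = 2 * (k - j) := by omega
  calc Nat.choose (2 * k) (2 * j) * Nat.doubleFactorial (2 * j - 1)
        * Nat.doubleFactorial (2 * (k - j) - 1) * (2 ^ k * k.factorial)
      = Nat.choose (2 * k) (2 * j) * Nat.doubleFactorial (2 * j - 1)
        * Nat.doubleFactorial (2 * (k - j) - 1)
        * (2 ^ j * 2 ^ (k - j) * (Nat.choose k j * j.factorial * (k - j).factorial)) := by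
        rw [hk, h2]
    _ = Nat.choose k j * (Nat.choose (2 * k) (2 * j)
          * (2 ^ j * j.factorial * Nat.doubleFactorial (2 * j - 1))
          * (2 ^ (k - j) * (k - j).factorial * Nat.doubleFactorial (2 * (k - j) - 1))) := by
        ring
    _ = Nat.choose k j * (Nat.choose (2 * k) (2 * j) * (2 * j).factorial
          * (2 * (k - j)).factorial) := by rw [e1, e2]
    _ = Nat.choose k j * (2 * k).factorial := by rw [← hsub, h1]

theorem doubleFactorial_binomial_sum (k : ℕ) :
    ∑ j ∈ Finset.range (k + 1),
        Nat.choose (2 * k) (2 * j) * Nat.doubleFactorial (2 * j - 1)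
          * Nat.doubleFactorial (2 * (k - j) - 1)
      = (2 * k).factorial / k.factorial := by
  have hdvd : k.factorial ∣ (2 * k).factorial :=
    Nat.factorial_dvd_factorial (by omega)
  have hpos : 0 < 2 ^ k * k.factorial :=
    Nat.mul_pos (Nat.pow_pos (by norm_num)) k.factorial_pos
  apply Nat.eq_of_mul_eq_mul_right hpos
  rw [Finset.sum_mul]
  rw [Finset.sum_congr rfl (fun j hj => key k j (by simpa using Nat.lt_succ_iff.mp (Finset.mem_range.mp hj)))]
  rw [← Finset.sum_mul, Nat.sum_range_choose]
  rw [← mul_assoc, mul_comm ((2 * k).factorial / k.factorial) (2 ^ k), mul_assoc,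
    Nat.div_mul_cancel hdvd]
end

section
/- For every y ∈ ℝ and every h > 0, |∫_ℝ K(x) f(y + x h) dx − f(y)| ≤ (h^m / m!) · ‖f^{(m)}‖_∞ · ∫_ℝ |x|^m |K(x)| dx. -/
open MeasureTheory Real Finset

lemma idw_eq (f : ℝ → ℝ) (m : ℕ) (hfd : ∀ i < m, Differentiable ℝ (iteratedDeriv i f))
    {a b : ℝ} (hab : a < b) :
    ∀ k, k ≤ m → ∀ x ∈ Set.Icc a b,
      iteratedDerivWithin k f (Set.Icc a b) x = iteratedDeriv k f x := by
  intro k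
  induction k with
  | zero => intro _ x _; simp
  | succ k ih =>
    intro hk x hx
    rw [iteratedDerivWithin_succ, iteratedDeriv_succ,
      derivWithin_congr (fun z hz => ih (Nat.le_of_succ_le hk) z hz)
        (ih (Nat.le_of_succ_le hk) x hx)]
    exact ((hfd k (Nat.lt_of_lt_of_le (Nat.lt_succ_self k) hk)).differentiableAt).derivWithin
      ((uniqueDiffOn_Icc hab) x hx)

lemma taylor_bound_lt (n : ℕ) (f : ℝ → ℝ)
    (hfd : ∀ i < n + 1, Differentiable ℝ (iteratedDeriv i f))
    (M : ℝ) (hM : ∀ y, |iteratedDeriv (n + 1) f y| ≤ M) (a t : ℝ) (hat : a < t) :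
    |f t - ∑ k ∈ Finset.range (n + 1),
        (k.factorial : ℝ)⁻¹ * (t - a) ^ k * iteratedDeriv k f a|
      ≤ M * |t - a| ^ (n + 1) / ((n + 1).factorial : ℝ) := by
  have heq := idw_eq f (n + 1) hfd hat
  have hC : ContDiff ℝ n f := contDiff_nat_iff_iteratedDeriv.2
    ⟨fun i hi => (hfd i (Nat.lt_succ_of_le hi)).continuous,
     fun i hi => hfd i (hi.trans (Nat.lt_succ_self n))⟩
  have hf' : DifferentiableOn ℝ (iteratedDerivWithin n f (Set.Icc a t)) (Set.Ioo a t) :=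
    ((hfd n (Nat.lt_succ_self n)).differentiableOn).congr
      (fun x hx => heq n (Nat.le_succ n) x (Set.Ioo_subset_Icc_self hx))
  obtain ⟨x', hx', hxeq⟩ := taylor_mean_remainder_lagrange hat.ne hC.contDiffOn
    (by rwa [Set.uIcc_of_lt hat, Set.uIoo_of_lt hat])
  rw [Set.uIcc_of_lt hat] at hxeq
  rw [Set.uIoo_of_lt hat] at hx'
  have hsum : taylorWithinEval f n (Set.Icc a t) a t
      = ∑ k ∈ Finset.range (n + 1),
        (k.factorial : ℝ)⁻¹ * (t - a) ^ k * iteratedDeriv k f a := by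
    rw [taylor_within_apply]
    refine Finset.sum_congr rfl fun k hk => ?_
    rw [heq k ((Finset.mem_range.1 hk).le) a (Set.left_mem_Icc.2 hat.le)]
    simp [smul_eq_mul]
  rw [← hsum, hxeq, heq (n + 1) le_rfl x' (Set.Ioo_subset_Icc_self hx')]
  rw [abs_div, abs_mul, abs_pow]
  rw [Nat.abs_cast]
  gcongr
  exact hM x'

lemma taylor_bound (n : ℕ) (f : ℝ → ℝ)
    (hfd : ∀ i < n + 1, Differentiable ℝ (iteratedDeriv i f))
    (M : ℝ) (hM : ∀ y, |iteratedDeriv (n + 1) f y| ≤ M) (a t : ℝ) :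
    |f t - ∑ k ∈ Finset.range (n + 1),
        (k.factorial : ℝ)⁻¹ * (t - a) ^ k * iteratedDeriv k f a|
      ≤ M * |t - a| ^ (n + 1) / ((n + 1).factorial : ℝ) := by
  rcases lt_trichotomy a t with hat | rfl | hta
  · exact taylor_bound_lt n f hfd M hM a t hat
  · simp [Finset.sum_range_succ', sub_self]
  · set g : ℝ → ℝ := fun s => f (-s) with hg
    have hgi : ∀ i, iteratedDeriv i g = fun s => (-1 : ℝ) ^ i * iteratedDeriv i f (-s) := by
      intro i
      funext s
      simpa [smul_eq_mul] using iteratedDeriv_comp_neg i f s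
    have hfd_g : ∀ i < n + 1, Differentiable ℝ (iteratedDeriv i g) := by
      intro i hi
      rw [hgi i]
      exact (((hfd i hi).comp differentiable_neg).const_mul _)
    have hM_g : ∀ s, |iteratedDeriv (n + 1) g s| ≤ M := by
      intro s
      rw [hgi (n + 1)]
      simp only [abs_mul, abs_pow, abs_neg, abs_one, one_pow, one_mul]
      exact hM (-s)
    have key := taylor_bound_lt n g hfd_g M hM_g (-a) (-t) (by linarith)
    have e1 : g (-t) = f t := by simp [hg]
    have e2 : ∀ k, (k.factorial : ℝ)⁻¹ * (-t - -a) ^ k * iteratedDeriv k g (-a)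
        = (k.factorial : ℝ)⁻¹ * (t - a) ^ k * iteratedDeriv k f a := by
      intro k
      rw [hgi k]
      have h3 : (-t - -a) ^ k * (-1 : ℝ) ^ k = (t - a) ^ k := by
        rw [← mul_pow]; congr 1; ring
      simp only [neg_neg]
      calc (k.factorial : ℝ)⁻¹ * (-t - -a) ^ k * ((-1:ℝ)^k * iteratedDeriv k f a)
          = (k.factorial : ℝ)⁻¹ * ((-t - -a)^k * (-1:ℝ)^k) * iteratedDeriv k f a := by ring
        _ = _ := by rw [h3]
    rw [e1] at key
    simp only [e2] at key
    have e3 : |-t - -a| = |t - a| := by rw [abs_sub_comm]; congr 1; ring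
    rw [e3] at key; exact key

theorem kernel_bias_bound
    (m : ℕ) (hm : 1 ≤ m)
    (K : ℝ → ℝ) (hK : Integrable K)
    (hK0 : ∫ x, K x = 1)
    (hKj : ∀ j, 1 ≤ j → j ≤ m - 1 → ∫ x, x ^ j * K x = 0)
    (hKm : Integrable (fun x => |x| ^ m * |K x|))
    (f : ℝ → ℝ)
    (hfd : ∀ i < m, Differentiable ℝ (iteratedDeriv i f))
    (M : ℝ) (hM : ∀ y, |iteratedDeriv m f y| ≤ M) :
    ∀ y : ℝ, ∀ h : ℝ, 0 < h →
      |(∫ x, K x * f (y + x * h)) - f y|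
        ≤ h ^ m / (m.factorial : ℝ) * M * ∫ x, |x| ^ m * |K x| := by
  obtain ⟨n, rfl⟩ : ∃ n, m = n + 1 := ⟨m - 1, (Nat.succ_pred_eq_of_pos hm).symm⟩
  intro y h hh
  have hf_cont : Continuous f := by
    have h0 := hfd 0 (Nat.succ_pos n)
    rw [iteratedDeriv_zero] at h0
    exact h0.continuous
  -- Taylor bound pointwise
  have htay : ∀ x : ℝ, |f (y + x * h) - ∑ k ∈ Finset.range (n + 1),
      (k.factorial : ℝ)⁻¹ * (x * h) ^ k * iteratedDeriv k f y|
      ≤ M * h ^ (n + 1) / ((n + 1).factorial : ℝ) * |x| ^ (n + 1) := by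
    intro x
    have := taylor_bound n f hfd M hM y (y + x * h)
    rw [add_sub_cancel_left] at this
    refine this.trans_eq ?_
    rw [abs_mul, abs_of_pos hh, mul_pow]
    ring
  -- integrability of x^k * K x for k ≤ n + 1
  have hintpow : ∀ k : ℕ, k ≤ n + 1 → Integrable (fun x => x ^ k * K x) := by
    intro k hk
    refine (hK.abs.add hKm).mono'
      (((continuous_pow k).aestronglyMeasurable).mul hK.1) (ae_of_all _ fun x => ?_)
    have hb : |x| ^ k ≤ 1 + |x| ^ (n + 1) := by
      rcases le_total |x| 1 with hx1 | hx1
      · have : |x| ^ k ≤ 1 := pow_le_one₀ (abs_nonneg x) hx1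
        nlinarith [pow_nonneg (abs_nonneg x) (n + 1)]
      · have : |x| ^ k ≤ |x| ^ (n + 1) := pow_le_pow_right₀ hx1 hk
        linarith
    have : ‖x ^ k * K x‖ = |x| ^ k * |K x| := by
      rw [Real.norm_eq_abs, abs_mul, abs_pow]
    rw [this]
    calc |x| ^ k * |K x| ≤ (1 + |x| ^ (n + 1)) * |K x| :=
          mul_le_mul_of_nonneg_right hb (abs_nonneg _)
      _ = |K x| + |x| ^ (n + 1) * |K x| := by ring
  -- the polynomial part
  set c : ℝ := M * h ^ (n + 1) / ((n + 1).factorial : ℝ) with hc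
  have hPe : ∀ x : ℝ, K x * (∑ k ∈ Finset.range (n + 1),
      (k.factorial : ℝ)⁻¹ * (x * h) ^ k * iteratedDeriv k f y)
      = ∑ k ∈ Finset.range (n + 1),
        ((k.factorial : ℝ)⁻¹ * h ^ k * iteratedDeriv k f y) * (x ^ k * K x) := by
    intro x
    rw [Finset.mul_sum]
    exact Finset.sum_congr rfl fun k _ => by rw [mul_pow]; ring
  have hintKP : Integrable (fun x => ∑ k ∈ Finset.range (n + 1),
      ((k.factorial : ℝ)⁻¹ * h ^ k * iteratedDeriv k f y) * (x ^ k * K x)) :=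
    integrable_finset_sum _ fun k hk =>
      ((hintpow k (Finset.mem_range.1 hk).le).const_mul _)
  have hintKP2 : Integrable (fun x => K x * (∑ k ∈ Finset.range (n + 1),
      (k.factorial : ℝ)⁻¹ * (x * h) ^ k * iteratedDeriv k f y)) :=
    hintKP.congr (ae_of_all _ fun x => (hPe x).symm)
  have hIKP : (∫ x, K x * (∑ k ∈ Finset.range (n + 1),
      (k.factorial : ℝ)⁻¹ * (x * h) ^ k * iteratedDeriv k f y)) = f y := by
    rw [integral_congr_ae (ae_of_all _ hPe),
      integral_finset_sum _ fun k hk => ((hintpow k (Finset.mem_range.1 hk).le).const_mul _)]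
    rw [Finset.sum_eq_single 0]
    · rw [integral_const_mul]
      simp only [pow_zero, one_mul, Nat.factorial_zero, Nat.cast_one, inv_one,
        iteratedDeriv_zero, hK0, mul_one]
    · intro k hk hk0
      rw [integral_const_mul, hKj k (Nat.one_le_iff_ne_zero.2 hk0)
        (by simpa using Nat.le_of_lt_succ (Finset.mem_range.1 hk)), mul_zero]
    · intro h0
      exact absurd (Finset.mem_range.2 (Nat.succ_pos n)) h0
  -- integrability of the main integrand
  have hg_meas : AEStronglyMeasurable (fun x => K x * f (y + x * h)) volume :=
    hK.1.mul ((hf_cont.comp (by continuity : Continuous fun x : ℝ => y + x * h)).aestronglyMeasurable)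
  have hdom : Integrable (fun x => |K x * (∑ k ∈ Finset.range (n + 1),
      (k.factorial : ℝ)⁻¹ * (x * h) ^ k * iteratedDeriv k f y)| + c * (|x| ^ (n + 1) * |K x|)) :=
    hintKP2.abs.add ((hKm.const_mul c))
  have hbound : ∀ x : ℝ, ‖K x * f (y + x * h)‖ ≤ |K x * (∑ k ∈ Finset.range (n + 1),
      (k.factorial : ℝ)⁻¹ * (x * h) ^ k * iteratedDeriv k f y)| + c * (|x| ^ (n + 1) * |K x|) := by
    intro x
    set P := ∑ k ∈ Finset.range (n + 1),
      (k.factorial : ℝ)⁻¹ * (x * h) ^ k * iteratedDeriv k f y with hP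
    have h1 : |f (y + x * h)| ≤ |P| + c * |x| ^ (n + 1) := by
      have := htay x
      have h2 : |f (y + x * h)| - |P| ≤ |f (y + x * h) - P| := by
        exact abs_sub_abs_le_abs_sub _ _
      rw [hc]; linarith
    rw [Real.norm_eq_abs, abs_mul]
    calc |K x| * |f (y + x * h)| ≤ |K x| * (|P| + c * |x| ^ (n + 1)) :=
          mul_le_mul_of_nonneg_left h1 (abs_nonneg _)
      _ = |K x| * |P| + c * (|x| ^ (n + 1) * |K x|) := by ring
      _ = |K x * P| + c * (|x| ^ (n + 1) * |K x|) := by rw [abs_mul]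
  have hint_g : Integrable (fun x => K x * f (y + x * h)) :=
    hdom.mono' hg_meas (ae_of_all _ hbound)
  -- main estimate
  rw [← hIKP, ← integral_sub hint_g hintKP2]
  have hfin : ‖∫ x, (K x * f (y + x * h) - K x * (∑ k ∈ Finset.range (n + 1),
      (k.factorial : ℝ)⁻¹ * (x * h) ^ k * iteratedDeriv k f y))‖
      ≤ ∫ x, c * (|x| ^ (n + 1) * |K x|) := by
    refine norm_integral_le_of_norm_le (hKm.const_mul c) (ae_of_all _ fun x => ?_)
    rw [Real.norm_eq_abs, ← mul_sub, abs_mul]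
    calc |K x| * |f (y + x * h) - _| ≤ |K x| * (c * |x| ^ (n + 1)) :=
          mul_le_mul_of_nonneg_left (by rw [hc]; exact htay x) (abs_nonneg _)
      _ = c * (|x| ^ (n + 1) * |K x|) := by ring
  rw [Real.norm_eq_abs] at hfin
  refine hfin.trans ?_
  rw [integral_const_mul, hc]
  exact le_of_eq (by ring)
end

section
/- Assume additionally a_k ≥ 0 for 1 ≤ k ≤ J₁. Then for every U ≥ 1 and every y with |y| ≤ U, π(y) ≥ 2 δ₀ exp(−ᾱ₁ U^{2J₁}), where δ₀ = (2 Z_π)^{−1} exp(−α₀ − Σ_{J₁ < j ≤ J} |α_j| − ‖β‖_∞), ᾱ₁ = Σ_{j=1}^{J₁} α_j, and α₀ = Σ_{k=1}^{J₁} m_{2k} a_k. -/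
open MeasureTheory Real Finset

private lemma aux_integral_odd (f : ℝ → ℝ) (hodd : ∀ x, f (-x) = -f x) :
    ∫ x, f x = 0 := by
  have h := MeasureTheory.integral_neg_eq_self f volume
  simp only [hodd, integral_neg] at h
  linarith

private lemma aux_sum_even (n : ℕ) (f : ℕ → ℝ) (h : ∀ i, Odd i → f i = 0) :
    ∑ i ∈ Finset.range (2*n+1), f i = ∑ l ∈ Finset.range (n+1), f (2*l) := by
  induction n with
  | zero => simp
  | succ n ih =>
    rw [show 2*(n+1)+1 = (2*n+1)+1+1 from by ring, Finset.sum_range_succ,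
      Finset.sum_range_succ, ih, h (2*n+1) ⟨n, by ring⟩,
      Finset.sum_range_succ (fun l => f (2*l)) (n+1), Finset.sum_range_succ (fun l => f (2*l)) n,
      show (2*n+1)+1 = 2*(n+1) from by ring]
    ring

private lemma aux_sum_swap (n : ℕ) (f : ℕ → ℕ → ℝ) :
    ∑ j ∈ Finset.Icc 1 n, ∑ l ∈ Finset.Icc 1 j, f j l
      = ∑ l ∈ Finset.Icc 1 n, ∑ j ∈ Finset.Icc l n, f j l :=
  Finset.sum_comm' (by intro j l; simp only [Finset.mem_Icc]; omega)

private lemma aux_range_succ (j : ℕ) :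
    Finset.range (j+1) = insert 0 (Finset.Icc 1 j) := by
  ext x; simp only [Finset.mem_range, Finset.mem_insert, Finset.mem_Icc]; omega
theorem invariant_density_lower_bound
    (J₁ J : ℕ) (hJ₁ : 1 ≤ J₁) (hJ : J₁ ≤ J)
    (θ : ℕ → ℝ) (hθpos : ∀ j ∈ Finset.Icc (J₁+1) J, 0 < θ j)
    (hθdist : ∀ i ∈ Finset.Icc (J₁+1) J, ∀ j ∈ Finset.Icc (J₁+1) J, i ≠ j → θ i ≠ θ j)
    (a : ℕ → ℝ) (ha : ∀ k ∈ Finset.Icc 1 J₁, 0 ≤ a k)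
    (β β' β'' : ℝ → ℝ)
    (hβd : ∀ y, HasDerivAt β (β' y) y)
    (hβd2 : ∀ y, HasDerivAt β' (β'' y) y)
    (hβ''cont : Continuous β'')
    (hβeven : ∀ y, β (-y) = β y)
    (hβbd : ∃ C, ∀ y, |β y| ≤ C) (hβ'bd : ∃ C, ∀ y, |β' y| ≤ C)
    (hβ''bd : ∃ C, ∀ y, |β'' y| ≤ C)
    (hβ'L1 : Integrable β')
    (φ : ℝ → ℝ)
    (hφ : ∀ y, φ y = (∑ j ∈ Finset.Icc 1 J₁, a j * y ^ (2*j))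
        + (∑ j ∈ Finset.Icc (J₁+1) J, a j * Real.cos (θ j * y)) + β y)
    (p : ℝ → ℝ) (hpmeas : Measurable p) (hpnonneg : ∀ y, 0 ≤ p y)
    (hpint : ∫ y, p y = 1) (hpeven : ∀ y, p (-y) = p y)
    (hmom : ∀ k : ℕ, Integrable (fun y => y ^ k * p y))
    (Z : ℝ) (hZ : Z = ∫ x, Real.exp (-∫ s, φ (x - s) * p s))
    (hfix : ∀ y, p y = Z⁻¹ * Real.exp (-∫ s, φ (y - s) * p s))
    (m : ℕ → ℝ) (hm : ∀ k, m k = ∫ y, y ^ k * p y)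
    (α : ℕ → ℝ)
    (hα₁ : ∀ j ∈ Finset.Icc 1 J₁,
      α j = ∑ k ∈ Finset.Icc j J₁, (Nat.choose (2*k) (2*j) : ℝ) * m (2*(k-j)) * a k)
    (hα₂ : ∀ j ∈ Finset.Icc (J₁+1) J, α j = a j * ∫ x, Real.cos (θ j * x) * p x)
    (α₀ : ℝ) (hα₀ : α₀ = ∑ k ∈ Finset.Icc 1 J₁, m (2*k) * a k)
    (ᾱ₁ : ℝ) (hᾱ₁ : ᾱ₁ = ∑ j ∈ Finset.Icc 1 J₁, α j)
    (Bβ : ℝ) (hBβ : Bβ = ⨆ y : ℝ, |β y|)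
    (δ₀ : ℝ)
    (hδ₀ : δ₀ = (2 * Z)⁻¹
      * Real.exp (-α₀ - (∑ j ∈ Finset.Icc (J₁+1) J, |α j|) - Bβ)) :
    ∀ U : ℝ, 1 ≤ U → ∀ y : ℝ, |y| ≤ U →
      2 * δ₀ * Real.exp (-ᾱ₁ * U ^ (2 * J₁)) ≤ p y := by
  intro U hU y hy
  have hpInt : Integrable p := by simpa using hmom 0
  have hZpos : 0 < Z := by
    by_contra h
    push_neg at h
    have hinv : Z⁻¹ ≤ 0 := inv_nonpos.mpr h
    have hp0 : ∀ x, p x = 0 := by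
      intro x
      refine le_antisymm ?_ (hpnonneg x)
      rw [hfix x]
      exact mul_nonpos_of_nonpos_of_nonneg hinv (Real.exp_pos _).le
    have h0 : (∫ x, p x) = 0 := by simp [hp0]
    rw [hpint] at h0; norm_num at h0
  have hm_odd : ∀ k, Odd k → m k = 0 := by
    intro k hk
    rw [hm]
    apply aux_integral_odd
    intro x
    rw [hpeven x, hk.neg_pow]
    ring
  have hm_nonneg : ∀ k, 0 ≤ m (2*k) := by
    intro k
    rw [hm]
    apply integral_nonneg
    intro x
    have hx : (0:ℝ) ≤ x ^ (2*k) := by rw [pow_mul]; exact pow_nonneg (sq_nonneg x) k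
    exact mul_nonneg hx (hpnonneg x)
  have hpoly_fun : ∀ n : ℕ, (fun s => (y - s)^n * p s)
      = fun s => ∑ i ∈ Finset.range (n+1),
          ((-1:ℝ)^(i+n) * y^i * (n.choose i : ℝ)) * (s^(n-i) * p s) := by
    intro n
    funext s
    rw [sub_pow, Finset.sum_mul]
    exact Finset.sum_congr rfl fun i _ => by ring
  have hInt_poly : ∀ n : ℕ, Integrable (fun s => (y - s)^n * p s) := by
    intro n
    rw [hpoly_fun n]
    exact integrable_finset_sum _ fun i _ => (hmom (n-i)).const_mul _
  have hInt_cospart : ∀ c : ℝ, Integrable (fun s => Real.cos (c * s) * p s) := by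
    intro c
    refine hpInt.bdd_mul (c := 1) ?_ (ae_of_all _ fun x => by simpa using Real.abs_cos_le_one _)
    exact (Real.continuous_cos.comp (continuous_const.mul continuous_id)).aestronglyMeasurable
  have hInt_sinpart : ∀ c : ℝ, Integrable (fun s => Real.sin (c * s) * p s) := by
    intro c
    refine hpInt.bdd_mul (c := 1) ?_ (ae_of_all _ fun x => by simpa using Real.abs_sin_le_one _)
    exact (Real.continuous_sin.comp (continuous_const.mul continuous_id)).aestronglyMeasurable
  have hInt_cos : ∀ c : ℝ, Integrable (fun s => Real.cos (c * (y - s)) * p s) := by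
    intro c
    refine hpInt.bdd_mul (c := 1) ?_ (ae_of_all _ fun x => by simpa using Real.abs_cos_le_one _)
    exact (Real.continuous_cos.comp
      (continuous_const.mul (continuous_const.sub continuous_id))).aestronglyMeasurable
  have hβdiff : Differentiable ℝ β := fun x => (hβd x).differentiableAt
  have hβcont : Continuous β := hβdiff.continuous
  obtain ⟨Cβ, hCβ⟩ := hβbd
  have hInt_β : Integrable (fun s => β (y - s) * p s) := by
    refine hpInt.bdd_mul (c := Cβ) ?_ (ae_of_all _ fun x => by simpa using hCβ (y - x))
    exact (hβcont.comp (continuous_const.sub continuous_id)).aestronglyMeasurable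
  have hmomval : ∀ k : ℕ, ∫ s, s^k * p s = m k := fun k => (hm k).symm
  have hA : ∀ j : ℕ, ∫ s, (y - s)^(2*j) * p s
      = ∑ l ∈ Finset.range (j+1), ((2*j).choose (2*l) : ℝ) * m (2*(j-l)) * y^(2*l) := by
    intro j
    have hodd : ∀ i, Odd i →
        (-1:ℝ)^(i+2*j) * y^i * ((2*j).choose i : ℝ) * m (2*j - i) = 0 := by
      intro i hi
      rcases le_or_gt i (2*j) with h | h
      · have hz : m (2*j - i) = 0 := hm_odd _ (by
          obtain ⟨c, hc⟩ := hi; exact ⟨j - c - 1, by omega⟩)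
        rw [hz, mul_zero]
      · have hz : (2*j).choose i = 0 := Nat.choose_eq_zero_of_lt h
        rw [hz]; push_cast; ring
    rw [hpoly_fun (2*j), integral_finset_sum _ (fun i _ => (hmom (2*j - i)).const_mul _)]
    simp only [integral_const_mul, hmomval]
    rw [aux_sum_even j _ hodd]
    refine Finset.sum_congr rfl fun l hl => ?_
    have h1 : (-1:ℝ)^(2*l+2*j) = 1 := Even.neg_one_pow ⟨l+j, by ring⟩
    have h2 : 2*j - 2*l = 2*(j-l) := by omega
    rw [h1, h2]; ring
  have hi1 : Integrable (fun s => ∑ j ∈ Finset.Icc 1 J₁, a j * (y-s)^(2*j) * p s) :=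
    integrable_finset_sum _ fun j _ => by
      simpa [mul_assoc] using (hInt_poly (2*j)).const_mul (a j)
  have hi2 : Integrable (fun s => ∑ j ∈ Finset.Icc (J₁+1) J, a j * Real.cos (θ j * (y-s)) * p s) :=
    integrable_finset_sum _ fun j _ => by
      simpa [mul_assoc] using (hInt_cos (θ j)).const_mul (a j)
  have hS1 : ∫ s, (∑ j ∈ Finset.Icc 1 J₁, a j * (y-s)^(2*j) * p s)
      = α₀ + ∑ l ∈ Finset.Icc 1 J₁, α l * y^(2*l) := by
    rw [integral_finset_sum _ (fun j _ => by
      simpa [mul_assoc] using (hInt_poly (2*j)).const_mul (a j))]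
    have e1 : ∀ j ∈ Finset.Icc 1 J₁, ∫ s, a j * (y-s)^(2*j) * p s
        = a j * (m (2*j)
            + ∑ l ∈ Finset.Icc 1 j, ((2*j).choose (2*l) : ℝ) * m (2*(j-l)) * y^(2*l)) := by
      intro j _
      have e : (fun s => a j * (y-s)^(2*j) * p s) = fun s => a j * ((y-s)^(2*j) * p s) := by
        funext s; ring
      rw [e, integral_const_mul, hA j, aux_range_succ j, Finset.sum_insert (by simp)]
      norm_num
    rw [Finset.sum_congr rfl e1]
    simp only [mul_add]
    rw [Finset.sum_add_distrib]
    congr 1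
    · rw [hα₀]; exact Finset.sum_congr rfl fun k _ => mul_comm _ _
    · simp only [Finset.mul_sum]
      rw [aux_sum_swap J₁ (fun j l => a j * (((2*j).choose (2*l) : ℝ) * m (2*(j-l)) * y^(2*l)))]
      refine Finset.sum_congr rfl fun l hl => ?_
      rw [hα₁ l hl, Finset.sum_mul]
      exact Finset.sum_congr rfl fun k hk => by ring
  have hS2 : ∀ j ∈ Finset.Icc (J₁+1) J, ∫ s, a j * Real.cos (θ j * (y-s)) * p s
      = α j * Real.cos (θ j * y) := by
    intro j hj
    have e : (fun s => a j * Real.cos (θ j * (y-s)) * p s)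
        = fun s => a j * (Real.cos (θ j * y) * (Real.cos (θ j * s) * p s)
            + Real.sin (θ j * y) * (Real.sin (θ j * s) * p s)) := by
      funext s
      rw [mul_sub, Real.cos_sub]
      ring
    rw [e, integral_const_mul,
      integral_add ((hInt_cospart (θ j)).const_mul _) ((hInt_sinpart (θ j)).const_mul _),
      integral_const_mul, integral_const_mul]
    have hsin0 : ∫ s, Real.sin (θ j * s) * p s = 0 := by
      apply aux_integral_odd
      intro x
      rw [hpeven x, mul_neg, Real.sin_neg]
      ring
    rw [hsin0, hα₂ j hj]
    ring
  have hBβ_ge : ∀ x, |β x| ≤ Bβ := by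
    intro x
    rw [hBβ]
    exact le_ciSup ⟨Cβ, by rintro _ ⟨z, rfl⟩; exact hCβ z⟩ x
  have hS3 : ∫ s, β (y - s) * p s ≤ Bβ := by
    have h1 : ∫ s, β (y - s) * p s ≤ ∫ s, Bβ * p s := by
      apply integral_mono hInt_β (hpInt.const_mul Bβ)
      intro s
      exact mul_le_mul_of_nonneg_right ((le_abs_self _).trans (hBβ_ge _)) (hpnonneg s)
    rwa [integral_const_mul, hpint, mul_one] at h1
  have hsplit : (fun s => φ (y - s) * p s)
      = fun s => (∑ j ∈ Finset.Icc 1 J₁, a j * (y-s)^(2*j) * p s)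
        + ((∑ j ∈ Finset.Icc (J₁+1) J, a j * Real.cos (θ j * (y-s)) * p s)
        + β (y - s) * p s) := by
    funext s
    rw [hφ (y - s), add_mul, add_mul, Finset.sum_mul, Finset.sum_mul, add_assoc]
  have hIle : ∫ s, φ (y - s) * p s
      ≤ α₀ + ᾱ₁ * U^(2*J₁) + (∑ j ∈ Finset.Icc (J₁+1) J, |α j|) + Bβ := by
    have hi23 : Integrable (fun s => (∑ j ∈ Finset.Icc (J₁+1) J,
        a j * Real.cos (θ j * (y-s)) * p s) + β (y - s) * p s) := hi2.add hInt_β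
    rw [hsplit, integral_add hi1 hi23, integral_add hi2 hInt_β, hS1,
      integral_finset_sum _ (fun j _ => by
        simpa [mul_assoc] using (hInt_cos (θ j)).const_mul (a j)),
      Finset.sum_congr rfl hS2]
    have b1 : ∑ l ∈ Finset.Icc 1 J₁, α l * y^(2*l) ≤ ᾱ₁ * U^(2*J₁) := by
      rw [hᾱ₁, Finset.sum_mul]
      apply Finset.sum_le_sum
      intro l hl
      have hαnn : 0 ≤ α l := by
        rw [hα₁ l hl]
        apply Finset.sum_nonneg
        intro k hk
        simp only [Finset.mem_Icc] at hl hk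
        exact mul_nonneg (mul_nonneg (Nat.cast_nonneg _) (hm_nonneg _))
          (ha k (Finset.mem_Icc.mpr ⟨le_trans hl.1 hk.1, hk.2⟩))
      refine mul_le_mul_of_nonneg_left ?_ hαnn
      calc y^(2*l) ≤ |y^(2*l)| := le_abs_self _
        _ = |y|^(2*l) := abs_pow y _
        _ ≤ U^(2*l) := pow_le_pow_left₀ (abs_nonneg y) hy _
        _ ≤ U^(2*J₁) := pow_le_pow_right₀ hU (by
            simp only [Finset.mem_Icc] at hl; omega)
    have b2 : ∑ j ∈ Finset.Icc (J₁+1) J, α j * Real.cos (θ j * y)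
        ≤ ∑ j ∈ Finset.Icc (J₁+1) J, |α j| := by
      apply Finset.sum_le_sum
      intro j _
      calc α j * Real.cos (θ j * y) ≤ |α j * Real.cos (θ j * y)| := le_abs_self _
        _ = |α j| * |Real.cos (θ j * y)| := abs_mul _ _
        _ ≤ |α j| * 1 := mul_le_mul_of_nonneg_left (Real.abs_cos_le_one _) (abs_nonneg _)
        _ = |α j| := mul_one _
    linarith [hS3]
  rw [hfix y]
  have hlhs : 2 * δ₀ * Real.exp (-ᾱ₁ * U^(2*J₁))
      = Z⁻¹ * Real.exp (-(α₀ + ᾱ₁ * U^(2*J₁) + (∑ j ∈ Finset.Icc (J₁+1) J, |α j|) + Bβ)) := by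
    rw [hδ₀, mul_inv,
      show -(α₀ + ᾱ₁ * U^(2*J₁) + (∑ j ∈ Finset.Icc (J₁+1) J, |α j|) + Bβ)
        = (-α₀ - (∑ j ∈ Finset.Icc (J₁+1) J, |α j|) - Bβ) + (-ᾱ₁ * U^(2*J₁)) from by ring,
      Real.exp_add]
    ring
  rw [hlhs]
  exact mul_le_mul_of_nonneg_left (Real.exp_le_exp.mpr (by linarith))
    (inv_nonneg.mpr hZpos.le)
end

section
/- For every y ∈ ℝ, |(φ' ⋆ π)(y)| ≤ 2 Σ_{j=1}^{J₁} j |α_j| |y|^{2j−1} + Σ_{J₁ < j ≤ J} θ_j |α_j| + ‖β'‖_∞; in particular the logarithmic derivative l(y) = π'(y)/π(y) = −(φ' ⋆ π)(y) satisfies the same bound. -/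
open MeasureTheory Real Finset

lemma auxLDB_odd_integral (f : ℝ → ℝ) (h : ∀ x, f (-x) = -f x) : ∫ x, f x = 0 := by
  have h2 := integral_neg_eq_self f (volume : Measure ℝ)
  simp only [h] at h2
  rw [integral_neg] at h2
  linarith

lemma auxLDB_expand (p : ℝ → ℝ) (y : ℝ) (n : ℕ) :
    (fun x : ℝ => (y - x) ^ n * p x) =
      (fun x => ∑ i ∈ range (n+1), ((-1:ℝ)^(i+n) * y^i * (n.choose i)) * (x ^ (n-i) * p x)) := by
  funext x
  rw [sub_pow, Finset.sum_mul]
  exact Finset.sum_congr rfl fun i _ => by ring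

lemma auxLDB_int_pow (p : ℝ → ℝ) (hmom : ∀ k : ℕ, Integrable (fun y => y ^ k * p y)) (y : ℝ)
    (n : ℕ) : Integrable (fun x => (y - x) ^ n * p x) := by
  rw [auxLDB_expand]
  exact integrable_finset_sum _ (fun i _ => ((hmom (n-i)).const_mul _))

lemma auxLDB_conv_pow (p : ℝ → ℝ) (hmom : ∀ k : ℕ, Integrable (fun y => y ^ k * p y))
    (m : ℕ → ℝ) (hm : ∀ k, m k = ∫ y, y ^ k * p y) (y : ℝ) (n : ℕ) :
    ∫ x, (y - x) ^ n * p x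
      = ∑ i ∈ range (n+1), (-1:ℝ)^(i+n) * y^i * (n.choose i) * m (n-i) := by
  rw [auxLDB_expand, integral_finset_sum _ (fun i _ => ((hmom (n-i)).const_mul _))]
  exact Finset.sum_congr rfl fun i _ => by rw [integral_const_mul, ← hm]

lemma auxLDB_deriv_P (m : ℕ → ℝ) (n : ℕ) (y : ℝ) :
    HasDerivAt (fun z => ∑ i ∈ range (n+2), (-1:ℝ)^(i+(n+1)) * z^i * ((n+1).choose i) * m (n+1-i))
      (((n:ℝ)+1) * ∑ i ∈ range (n+1), (-1:ℝ)^(i+n) * y^i * (n.choose i) * m (n-i)) y := by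
  have h : ∀ i ∈ range (n+2),
      HasDerivAt (fun z : ℝ => (-1:ℝ)^(i+(n+1)) * z^i * ((n+1).choose i) * m (n+1-i))
        ((((-1:ℝ)^(i+(n+1)) * ((n+1).choose i) * m (n+1-i))) * ((i:ℝ) * y^(i-1))) y := by
    intro i _
    have h1 := (((hasDerivAt_pow i y).const_mul ((-1:ℝ)^(i+(n+1)))).mul_const
      (((n+1).choose i : ℝ))).mul_const (m (n+1-i))
    exact h1.congr_deriv (by ring)
  have H := HasDerivAt.fun_sum h
  have key : (∑ i ∈ range (n+2),
        (((-1:ℝ)^(i+(n+1)) * ((n+1).choose i) * m (n+1-i))) * ((i:ℝ) * y^(i-1)))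
      = ((n:ℝ)+1) * ∑ i ∈ range (n+1), (-1:ℝ)^(i+n) * y^i * (n.choose i) * m (n-i) := by
    rw [Finset.sum_range_succ', Finset.mul_sum]
    simp only [Nat.cast_zero, zero_mul, mul_zero, add_zero]
    refine Finset.sum_congr rfl fun i _ => ?_
    have hc : ((n:ℝ)+1) * (n.choose i : ℝ) = ((n+1).choose (i+1) : ℝ) * ((i:ℝ)+1) := by
      exact_mod_cast congrArg (Nat.cast : ℕ → ℝ) (Nat.add_one_mul_choose_eq n i)
    rw [show i+1+(n+1) = (i+n)+2 by omega, pow_add, neg_one_sq, mul_one,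
      Nat.succ_sub_succ, Nat.add_sub_cancel]
    push_cast
    linear_combination (-((-1:ℝ)^(i+n) * y^i * m (n-i))) * hc
  rw [← key]
  exact H

lemma auxLDB_sum_even_zero (f : ℕ → ℝ) (k : ℕ) (h : ∀ j < k, f (2*j) = 0) :
    ∑ i ∈ range (2*k), f i = ∑ j ∈ range k, f (2*j+1) := by
  induction k with
  | zero => simp
  | succ k ih =>
    have h1 : ∀ j < k, f (2*j) = 0 := fun j hj => h j (by omega)
    rw [show 2*(k+1) = (2*k+1)+1 by ring, Finset.sum_range_succ,
      show 2*k+1 = 2*k+1 from rfl, Finset.sum_range_succ, ih h1, h k (by omega),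
      Finset.sum_range_succ]
    ring

-- trig convolution lemmas
lemma auxLDB_sin_mom (p : ℝ → ℝ) (hpeven : ∀ y, p (-y) = p y) (t : ℝ) :
    ∫ x, Real.sin (t*x) * p x = 0 := by
  apply auxLDB_odd_integral
  intro x
  rw [hpeven, mul_neg, Real.sin_neg]
  ring

lemma auxLDB_int_cos (p : ℝ → ℝ) (hp : Integrable p) (f : ℝ → ℝ) (hf : Continuous f)
    (hfb : ∀ x, |f x| ≤ 1) : Integrable (fun x => f x * p x) :=
  hp.bdd_mul (c := 1) hf.aestronglyMeasurable (Filter.Eventually.of_forall fun x => by simpa [Real.norm_eq_abs] using hfb x)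

lemma auxLDB_sin_conv (p : ℝ → ℝ) (hp : Integrable p) (hpeven : ∀ y, p (-y) = p y) (t y : ℝ) :
    ∫ x, Real.sin (t*(y-x)) * p x = Real.sin (t*y) * ∫ x, Real.cos (t*x) * p x := by
  have h1 : (fun x => Real.sin (t*(y-x)) * p x)
      = fun x => Real.sin (t*y) * (Real.cos (t*x) * p x) - Real.cos (t*y) * (Real.sin (t*x) * p x) := by
    funext x
    rw [mul_sub, Real.sin_sub]
    ring
  rw [h1, integral_sub (((auxLDB_int_cos p hp _ (by continuity) (fun x => Real.abs_cos_le_one _)).const_mul _))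
      (((auxLDB_int_cos p hp _ (by continuity) (fun x => Real.abs_sin_le_one _)).const_mul _)),
    integral_const_mul, integral_const_mul, auxLDB_sin_mom p hpeven]
  ring

lemma auxLDB_cos_conv (p : ℝ → ℝ) (hp : Integrable p) (hpeven : ∀ y, p (-y) = p y) (t y : ℝ) :
    ∫ x, Real.cos (t*(y-x)) * p x = Real.cos (t*y) * ∫ x, Real.cos (t*x) * p x := by
  have h1 : (fun x => Real.cos (t*(y-x)) * p x)
      = fun x => Real.cos (t*y) * (Real.cos (t*x) * p x) + Real.sin (t*y) * (Real.sin (t*x) * p x) := by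
    funext x
    rw [mul_sub, Real.cos_sub]
    ring
  rw [h1, integral_add (((auxLDB_int_cos p hp _ (by continuity) (fun x => Real.abs_cos_le_one _)).const_mul _))
      (((auxLDB_int_cos p hp _ (by continuity) (fun x => Real.abs_sin_le_one _)).const_mul _)),
    integral_const_mul, integral_const_mul, auxLDB_sin_mom p hpeven]
  ring

lemma auxLDB_P_odd (m : ℕ → ℝ) (hm0 : ∀ t, m (2*t+1) = 0) (k : ℕ) (hk : 1 ≤ k) (y : ℝ) :
    ∑ i ∈ range (2*k-1+1), (-1:ℝ)^(i+(2*k-1)) * y^i * ((2*k-1).choose i) * m (2*k-1-i)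
      = ∑ j ∈ range k, y^(2*j+1) * ((2*k-1).choose (2*j+1)) * m (2*k-2*j-2) := by
  rw [show 2*k-1+1 = 2*k by omega]
  rw [auxLDB_sum_even_zero _ k (fun j hj => by
    rw [show 2*k-1-2*j = 2*(k-1-j)+1 by omega, hm0, mul_zero])]
  refine Finset.sum_congr rfl fun j _ => ?_
  rw [show 2*j+1+(2*k-1) = 2*(j+k) by omega, pow_mul, show 2*k-1-(2*j+1) = 2*k-2*j-2 by omega]
  simp

lemma auxLDB_T (m : ℕ → ℝ) (hm0 : ∀ t, m (2*t+1) = 0) (a α : ℕ → ℝ) (J₁ : ℕ)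
    (hα₁ : ∀ j ∈ Finset.Icc 1 J₁,
      α j = ∑ k ∈ Finset.Icc j J₁, (Nat.choose (2*k) (2*j) : ℝ) * m (2*(k-j)) * a k)
    (y : ℝ) :
    ∑ k ∈ Finset.Icc 1 J₁, a k * ((2*(k:ℝ))
        * ∑ i ∈ range (2*k-1+1), (-1:ℝ)^(i+(2*k-1)) * y^i * ((2*k-1).choose i) * m (2*k-1-i))
      = ∑ j ∈ Finset.Icc 1 J₁, 2*(j:ℝ) * α j * y^(2*j-1) := by
  have hL : ∀ k ∈ Finset.Icc 1 J₁, a k * ((2*(k:ℝ))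
        * ∑ i ∈ range (2*k-1+1), (-1:ℝ)^(i+(2*k-1)) * y^i * ((2*k-1).choose i) * m (2*k-1-i))
      = ∑ i ∈ range k, a k * ((2*(k:ℝ)) * (y^(2*i+1) * ((2*k-1).choose (2*i+1)) * m (2*k-2*i-2))) := by
    intro k hk
    rw [auxLDB_P_odd m hm0 k (Finset.mem_Icc.mp hk).1 y]
    simp only [Finset.mul_sum]
  rw [Finset.sum_congr rfl hL]
  have hR : ∀ j ∈ Finset.Icc 1 J₁, 2*(j:ℝ) * α j * y^(2*j-1)
      = ∑ k ∈ Finset.Icc j J₁, 2*(j:ℝ) * ((Nat.choose (2*k) (2*j) : ℝ) * m (2*(k-j)) * a k) * y^(2*j-1) := by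
    intro j hj
    rw [hα₁ j hj]
    simp only [Finset.mul_sum, Finset.sum_mul]
  rw [Finset.sum_congr rfl hR]
  simp only [← Finset.Ico_add_one_right_eq_Icc]
  rw [Finset.sum_Ico_Ico_comm 1 (J₁+1)
    (fun j k => 2*(j:ℝ) * ((Nat.choose (2*k) (2*j) : ℝ) * m (2*(k-j)) * a k) * y^(2*j-1))]
  refine Finset.sum_congr rfl fun k hk => ?_
  have hk1 : 1 ≤ k := (Finset.mem_Ico.mp hk).1
  rw [Finset.sum_Ico_eq_sum_range]
  rw [show k+1-1 = k by omega]
  refine Finset.sum_congr rfl fun i hi => ?_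
  have hik : i < k := Finset.mem_range.mp hi
  have hc2 : (2*(k:ℝ)) * (((2*k-1).choose (2*i+1) : ℕ) : ℝ)
      = (((2*k).choose (2*i+2) : ℕ) : ℝ) * (2*(i:ℝ)+2) := by
    have h := Nat.add_one_mul_choose_eq (2*k-1) (2*i+1)
    rw [show 2*k-1+1 = 2*k by omega, show 2*i+1+1 = 2*i+2 by omega] at h
    exact_mod_cast congrArg (Nat.cast : ℕ → ℝ) h
  rw [show 2*(1+i) = 2*i+2 by omega, show 2*(k-(1+i)) = 2*k-2*i-2 by omega,
    show 2*i+2-1 = 2*i+1 by omega]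
  push_cast
  linear_combination (a k * y^(2*i+1) * m (2*k-2*i-2)) * hc2

lemma auxLDB_conv_int (p : ℝ → ℝ) (hp : Integrable p) (g : ℝ → ℝ) (hg : Continuous g)
    (C : ℝ) (hC : ∀ x, |g x| ≤ C) (y : ℝ) : Integrable (fun s => g (y - s) * p s) :=
  hp.bdd_mul (hg.comp (continuous_const.sub continuous_id)).aestronglyMeasurable
    (c := C) (Filter.Eventually.of_forall fun x => by simpa [Real.norm_eq_abs] using hC (y - x))

lemma auxLDB_beta_deriv (p : ℝ → ℝ) (hp : Integrable p) (hpnonneg : ∀ y, 0 ≤ p y)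
    (β β' : ℝ → ℝ) (hβd : ∀ y, HasDerivAt β (β' y) y)
    (hβcont : Continuous β) (hβ'cont : Continuous β')
    (Cβ : ℝ) (hCβ : ∀ y, |β y| ≤ Cβ) (Cβ' : ℝ) (hCβ' : ∀ y, |β' y| ≤ Cβ') (y₀ : ℝ) :
    HasDerivAt (fun y => ∫ s, β (y - s) * p s) (∫ s, β' (y₀ - s) * p s) y₀ := by
  have h := hasDerivAt_integral_of_dominated_loc_of_deriv_le (μ := (volume : Measure ℝ))
    (F := fun x a => β (x - a) * p a) (F' := fun x a => β' (x - a) * p a)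
    (x₀ := y₀) (bound := fun a => Cβ' * p a) (s := Metric.ball y₀ 1) (Metric.ball_mem_nhds y₀ one_pos)
    (Filter.Eventually.of_forall fun x =>
      ((hβcont.comp (continuous_const.sub continuous_id)).aestronglyMeasurable.mul
        hp.aestronglyMeasurable))
    (auxLDB_conv_int p hp β hβcont Cβ hCβ y₀)
    ((hβ'cont.comp (continuous_const.sub continuous_id)).aestronglyMeasurable.mul
        hp.aestronglyMeasurable)
    (Filter.Eventually.of_forall fun a => by
      intro x _
      rw [Real.norm_eq_abs, abs_mul, abs_of_nonneg (hpnonneg a)]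
      exact mul_le_mul_of_nonneg_right (hCβ' _) (hpnonneg a))
    (hp.const_mul Cβ')
    (Filter.Eventually.of_forall fun a => by
      intro x _
      exact (((hβd (x - a)).comp x ((hasDerivAt_id x).sub_const a)).mul_const (p a)).congr_deriv
        (by ring))
  exact h.2

theorem log_derivative_bound
    (J₁ J : ℕ) (hJ₁ : 1 ≤ J₁) (hJ : J₁ ≤ J)
    (θ : ℕ → ℝ) (hθpos : ∀ j ∈ Finset.Icc (J₁+1) J, 0 < θ j)
    (hθdist : ∀ i ∈ Finset.Icc (J₁+1) J, ∀ j ∈ Finset.Icc (J₁+1) J, i ≠ j → θ i ≠ θ j)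
    (a : ℕ → ℝ)
    (β β' β'' : ℝ → ℝ)
    (hβd : ∀ y, HasDerivAt β (β' y) y)
    (hβd2 : ∀ y, HasDerivAt β' (β'' y) y)
    (hβ''cont : Continuous β'')
    (hβeven : ∀ y, β (-y) = β y)
    (hβbd : ∃ C, ∀ y, |β y| ≤ C) (hβ'bd : ∃ C, ∀ y, |β' y| ≤ C)
    (hβ''bd : ∃ C, ∀ y, |β'' y| ≤ C)
    (hβ'L1 : Integrable β')
    (φ φd : ℝ → ℝ)
    (hφ : ∀ y, φ y = (∑ j ∈ Finset.Icc 1 J₁, a j * y ^ (2*j))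
        + (∑ j ∈ Finset.Icc (J₁+1) J, a j * Real.cos (θ j * y)) + β y)
    (hφd : ∀ y, HasDerivAt φ (φd y) y)
    (p pd : ℝ → ℝ) (hpmeas : Measurable p) (hpnonneg : ∀ y, 0 ≤ p y)
    (hpint : ∫ y, p y = 1) (hpeven : ∀ y, p (-y) = p y)
    (hpd : ∀ y, HasDerivAt p (pd y) y)
    (hmom : ∀ k : ℕ, Integrable (fun y => y ^ k * p y))
    (Z : ℝ) (hZ : Z = ∫ x, Real.exp (-∫ s, φ (x - s) * p s))
    (hfix : ∀ y, p y = Z⁻¹ * Real.exp (-∫ s, φ (y - s) * p s))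
    (m : ℕ → ℝ) (hm : ∀ k, m k = ∫ y, y ^ k * p y)
    (α : ℕ → ℝ)
    (hα₁ : ∀ j ∈ Finset.Icc 1 J₁,
      α j = ∑ k ∈ Finset.Icc j J₁, (Nat.choose (2*k) (2*j) : ℝ) * m (2*(k-j)) * a k)
    (hα₂ : ∀ j ∈ Finset.Icc (J₁+1) J, α j = a j * ∫ x, Real.cos (θ j * x) * p x)
    (Bβ' : ℝ) (hBβ' : Bβ' = ⨆ y : ℝ, |β' y|) :
    ∀ y : ℝ,
      |∫ x, φd (y - x) * p x|
          ≤ 2 * (∑ j ∈ Finset.Icc 1 J₁, (j : ℝ) * |α j| * |y| ^ (2 * j - 1))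
            + (∑ j ∈ Finset.Icc (J₁+1) J, θ j * |α j|) + Bβ'
      ∧ pd y / p y = -∫ x, φd (y - x) * p x
      ∧ |pd y / p y|
          ≤ 2 * (∑ j ∈ Finset.Icc 1 J₁, (j : ℝ) * |α j| * |y| ^ (2 * j - 1))
            + (∑ j ∈ Finset.Icc (J₁+1) J, θ j * |α j|) + Bβ' := by
  obtain ⟨Cβ, hCβ⟩ := hβbd
  obtain ⟨Cβ', hCβ'⟩ := hβ'bd
  have hpInt : Integrable p := by simpa using hmom 0
  have hβcont : Continuous β := continuous_iff_continuousAt.mpr fun z => (hβd z).continuousAt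
  have hβ'cont : Continuous β' := continuous_iff_continuousAt.mpr fun z => (hβd2 z).continuousAt
  have hm0 : ∀ t, m (2*t+1) = 0 := by
    intro t
    rw [hm]
    apply auxLDB_odd_integral
    intro x
    rw [hpeven, Odd.neg_pow ⟨t, by omega⟩ x]
    ring
  have hbB : ∀ z, |β' z| ≤ Bβ' := by
    intro z
    rw [hBβ']
    exact le_ciSup ⟨Cβ', by rintro _ ⟨w, rfl⟩; exact hCβ' w⟩ z
  -- the derivative of φ
  have hφψ : ∀ z, HasDerivAt φ
      ((∑ j ∈ Finset.Icc 1 J₁, a j * ((2*(j:ℝ)) * z^(2*j-1)))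
        + (∑ j ∈ Finset.Icc (J₁+1) J, -(a j * (θ j * Real.sin (θ j * z))))
        + β' z) z := by
    intro z
    have hfun : φ = fun w => (∑ j ∈ Finset.Icc 1 J₁, a j * w ^ (2*j))
        + (∑ j ∈ Finset.Icc (J₁+1) J, a j * Real.cos (θ j * w)) + β w := funext hφ
    rw [hfun]
    refine HasDerivAt.add (HasDerivAt.add ?_ ?_) (hβd z)
    · exact HasDerivAt.fun_sum fun j hj =>
        ((hasDerivAt_pow (2*j) z).const_mul (a j)).congr_deriv (by push_cast; ring)
    · refine HasDerivAt.fun_sum fun j hj => ?_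
      have h0 : HasDerivAt (fun w : ℝ => θ j * w) (θ j) z := by
        simpa using (hasDerivAt_id z).const_mul (θ j)
      exact (h0.cos.const_mul (a j)).congr_deriv (by ring)
  have hφdψ : ∀ z, φd z = (∑ j ∈ Finset.Icc 1 J₁, a j * ((2*(j:ℝ)) * z^(2*j-1)))
        + (∑ j ∈ Finset.Icc (J₁+1) J, -(a j * (θ j * Real.sin (θ j * z))))
        + β' z := fun z => (hφd z).unique (hφψ z)
  -- the convolution of φd with p
  have hD : ∀ y : ℝ, ∫ x, φd (y - x) * p x =
      (∑ j ∈ Finset.Icc 1 J₁, 2*(j:ℝ) * α j * y^(2*j-1))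
      + ((∑ j ∈ Finset.Icc (J₁+1) J, -(θ j * α j * Real.sin (θ j * y)))
      + ∫ x, β' (y - x) * p x) := by
    intro y
    have h1 : (fun x => φd (y - x) * p x) = fun x =>
        (∑ j ∈ Finset.Icc 1 J₁, (a j * (2*(j:ℝ))) * ((y - x)^(2*j-1) * p x))
        + ((∑ j ∈ Finset.Icc (J₁+1) J, (-(a j * θ j)) * (Real.sin (θ j * (y - x)) * p x))
        + β' (y - x) * p x) := by
      funext x
      rw [hφdψ (y - x)]
      simp only [add_mul, Finset.sum_mul, neg_mul, add_assoc]
      congr 1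
      · exact Finset.sum_congr rfl fun j _ => by ring
      congr 1
      · exact Finset.sum_congr rfl fun j _ => by ring
    have iS1 : Integrable (fun x => ∑ j ∈ Finset.Icc 1 J₁,
        (a j * (2*(j:ℝ))) * ((y - x)^(2*j-1) * p x)) :=
      integrable_finset_sum _ fun j _ => ((auxLDB_int_pow p hmom y (2*j-1)).const_mul _)
    have iS2 : Integrable (fun x => ∑ j ∈ Finset.Icc (J₁+1) J,
        (-(a j * θ j)) * (Real.sin (θ j * (y - x)) * p x)) :=
      integrable_finset_sum _ fun j _ =>
        ((auxLDB_int_cos p hpInt (fun x => Real.sin (θ j * (y - x)))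
          (Real.continuous_sin.comp (continuous_const.mul (continuous_const.sub continuous_id)))
          (fun x => Real.abs_sin_le_one _)).const_mul _)
    have iC : Integrable (fun x => β' (y - x) * p x) :=
      auxLDB_conv_int p hpInt β' hβ'cont Cβ' hCβ' y
    have iS23 : Integrable (fun x => (∑ j ∈ Finset.Icc (J₁+1) J,
        (-(a j * θ j)) * (Real.sin (θ j * (y - x)) * p x)) + β' (y - x) * p x) := iS2.add iC
    rw [h1, integral_add iS1 iS23, integral_add iS2 iC,
      integral_finset_sum _ (fun j _ => ((auxLDB_int_pow p hmom y (2*j-1)).const_mul _)),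
      integral_finset_sum _ (fun j _ =>
        ((auxLDB_int_cos p hpInt (fun x => Real.sin (θ j * (y - x)))
          (Real.continuous_sin.comp (continuous_const.mul (continuous_const.sub continuous_id)))
          (fun x => Real.abs_sin_le_one _)).const_mul _))]
    simp only [integral_const_mul]
    congr 1
    · -- polynomial part
      rw [← auxLDB_T m hm0 a α J₁ hα₁ y]
      refine Finset.sum_congr rfl fun j hj => ?_
      rw [auxLDB_conv_pow p hmom m hm y (2*j-1)]
      ring
    congr 1
    · refine Finset.sum_congr rfl fun j hj => ?_
      rw [auxLDB_sin_conv p hpInt hpeven (θ j) y, hα₂ j hj]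
      ring
  -- splitting of the convolution of φ with p
  have hGsplit : (fun y => ∫ s, φ (y - s) * p s) = fun y =>
      (∑ j ∈ Finset.Icc 1 J₁, a j * (∫ x, (y - x)^(2*j) * p x))
      + ((∑ j ∈ Finset.Icc (J₁+1) J,
          a j * (Real.cos (θ j * y) * ∫ x, Real.cos (θ j * x) * p x))
      + ∫ s, β (y - s) * p s) := by
    funext y
    have h1 : (fun s => φ (y - s) * p s) = fun s =>
        (∑ j ∈ Finset.Icc 1 J₁, a j * ((y - s)^(2*j) * p s))
        + ((∑ j ∈ Finset.Icc (J₁+1) J, a j * (Real.cos (θ j * (y - s)) * p s))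
        + β (y - s) * p s) := by
      funext s
      rw [hφ (y - s)]
      simp only [add_mul, Finset.sum_mul, add_assoc]
      congr 1
      · exact Finset.sum_congr rfl fun j _ => by ring
      congr 1
      · exact Finset.sum_congr rfl fun j _ => by ring
    have iS1 : Integrable (fun s => ∑ j ∈ Finset.Icc 1 J₁, a j * ((y - s)^(2*j) * p s)) :=
      integrable_finset_sum _ fun j _ => ((auxLDB_int_pow p hmom y (2*j)).const_mul _)
    have iS2 : Integrable (fun s => ∑ j ∈ Finset.Icc (J₁+1) J,
        a j * (Real.cos (θ j * (y - s)) * p s)) :=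
      integrable_finset_sum _ fun j _ =>
        ((auxLDB_int_cos p hpInt (fun x => Real.cos (θ j * (y - x)))
          (Real.continuous_cos.comp (continuous_const.mul (continuous_const.sub continuous_id)))
          (fun x => Real.abs_cos_le_one _)).const_mul _)
    have iC : Integrable (fun s => β (y - s) * p s) :=
      auxLDB_conv_int p hpInt β hβcont Cβ hCβ y
    have iS23 : Integrable (fun s => (∑ j ∈ Finset.Icc (J₁+1) J,
        a j * (Real.cos (θ j * (y - s)) * p s)) + β (y - s) * p s) := iS2.add iC
    rw [h1, integral_add iS1 iS23, integral_add iS2 iC,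
      integral_finset_sum _ (fun j _ => ((auxLDB_int_pow p hmom y (2*j)).const_mul _)),
      integral_finset_sum _ (fun j _ =>
        ((auxLDB_int_cos p hpInt (fun x => Real.cos (θ j * (y - x)))
          (Real.continuous_cos.comp (continuous_const.mul (continuous_const.sub continuous_id)))
          (fun x => Real.abs_cos_le_one _)).const_mul _))]
    simp only [integral_const_mul]
    congr 2
    refine Finset.sum_congr rfl fun j hj => ?_
    rw [auxLDB_cos_conv p hpInt hpeven (θ j) y]
  -- derivative of the convolution of φ with p
  have hGd : ∀ y : ℝ, HasDerivAt (fun w => ∫ s, φ (w - s) * p s)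
      ((∑ j ∈ Finset.Icc 1 J₁, 2*(j:ℝ) * α j * y^(2*j-1))
      + ((∑ j ∈ Finset.Icc (J₁+1) J, -(θ j * α j * Real.sin (θ j * y)))
      + ∫ x, β' (y - x) * p x)) y := by
    intro y
    rw [hGsplit]
    refine HasDerivAt.add ?_ (HasDerivAt.add ?_ ?_)
    · -- polynomial part
      have hsum : HasDerivAt
          (fun w => ∑ j ∈ Finset.Icc 1 J₁, a j * (∫ x, (w - x)^(2*j) * p x))
          (∑ j ∈ Finset.Icc 1 J₁, a j * ((2*(j:ℝ)) * ∑ i ∈ range (2*j-1+1),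
            (-1:ℝ)^(i+(2*j-1)) * y^i * ((2*j-1).choose i) * m (2*j-1-i))) y := by
        refine HasDerivAt.fun_sum fun j hj => ?_
        have hj1 : 1 ≤ j := (Finset.mem_Icc.mp hj).1
        have e1 : (fun z : ℝ => ∫ x, (z - x)^(2*j) * p x)
            = fun z => ∑ i ∈ range (2*j-1+2), (-1:ℝ)^(i+(2*j-1+1)) * z^i
                * ((2*j-1+1).choose i) * m (2*j-1+1-i) := by
          funext z
          rw [show 2*j-1+2 = 2*j+1 by omega, show 2*j-1+1 = 2*j by omega]
          exact auxLDB_conv_pow p hmom m hm z (2*j)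
        have hc : (((2*j-1:ℕ):ℝ)) + 1 = 2*(j:ℝ) := by
          rw [Nat.cast_sub (by omega : 1 ≤ 2*j)]
          push_cast
          ring
        have hd2 : HasDerivAt (fun z : ℝ => ∫ x, (z - x)^(2*j) * p x)
            ((((2*j-1:ℕ):ℝ)+1) * ∑ i ∈ range (2*j-1+1),
              (-1:ℝ)^(i+(2*j-1)) * y^i * ((2*j-1).choose i) * m (2*j-1-i)) y := by
          rw [e1]
          exact auxLDB_deriv_P m (2*j-1) y
        exact (hd2.const_mul (a j)).congr_deriv (by rw [hc])
      refine hsum.congr_deriv ?_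
      rw [← auxLDB_T m hm0 a α J₁ hα₁ y]
    · refine HasDerivAt.fun_sum fun j hj => ?_
      have h0 : HasDerivAt (fun w : ℝ => θ j * w) (θ j) y := by
        simpa using (hasDerivAt_id y).const_mul (θ j)
      exact ((h0.cos.mul_const (∫ x, Real.cos (θ j * x) * p x)).const_mul (a j)).congr_deriv
        (by rw [hα₂ j hj]; ring)
    · exact auxLDB_beta_deriv p hpInt hpnonneg β β' hβd hβcont hβ'cont Cβ hCβ Cβ' hCβ' y
  -- positivity of p
  have hZne : Z⁻¹ ≠ 0 := by
    intro h0
    have hp0 : ∀ y, p y = 0 := fun y => by rw [hfix y, h0, zero_mul]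
    rw [show (fun y => p y) = fun _ : ℝ => (0:ℝ) from funext hp0] at hpint
    simp at hpint
  have hpn0 : ∀ y, p y ≠ 0 := fun y => by
    rw [hfix y]; exact mul_ne_zero hZne (Real.exp_ne_zero _)
  -- formula for pd
  have hpdval : ∀ y : ℝ, pd y = p y * -((∑ j ∈ Finset.Icc 1 J₁, 2*(j:ℝ) * α j * y^(2*j-1))
      + ((∑ j ∈ Finset.Icc (J₁+1) J, -(θ j * α j * Real.sin (θ j * y)))
      + ∫ x, β' (y - x) * p x)) := by
    intro y
    have hder := ((hGd y).neg.exp.const_mul Z⁻¹)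
    have hder2 : HasDerivAt p (p y * -((∑ j ∈ Finset.Icc 1 J₁, 2*(j:ℝ) * α j * y^(2*j-1))
        + ((∑ j ∈ Finset.Icc (J₁+1) J, -(θ j * α j * Real.sin (θ j * y)))
        + ∫ x, β' (y - x) * p x))) y := by
      refine (hder.congr_deriv ?_).congr_of_eventuallyEq
        (Filter.Eventually.of_forall fun z => hfix z)
      rw [hfix y]
      simp only [Pi.neg_apply]
      ring
    exact (hpd y).unique hder2
  -- the bound
  have hbound : ∀ y : ℝ, |(∑ j ∈ Finset.Icc 1 J₁, 2*(j:ℝ) * α j * y^(2*j-1))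
      + ((∑ j ∈ Finset.Icc (J₁+1) J, -(θ j * α j * Real.sin (θ j * y)))
      + ∫ x, β' (y - x) * p x)|
      ≤ 2 * (∑ j ∈ Finset.Icc 1 J₁, (j : ℝ) * |α j| * |y| ^ (2 * j - 1))
        + (∑ j ∈ Finset.Icc (J₁+1) J, θ j * |α j|) + Bβ' := by
    intro y
    have hA : |∑ j ∈ Finset.Icc 1 J₁, 2*(j:ℝ) * α j * y^(2*j-1)|
        ≤ 2 * (∑ j ∈ Finset.Icc 1 J₁, (j : ℝ) * |α j| * |y| ^ (2 * j - 1)) := by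
      refine (Finset.abs_sum_le_sum_abs _ _).trans ?_
      rw [Finset.mul_sum]
      refine Finset.sum_le_sum fun j _ => ?_
      rw [abs_mul, abs_mul, abs_pow]
      rw [abs_of_nonneg (by positivity : (0:ℝ) ≤ 2*(j:ℝ))]
      ring_nf
      exact le_refl _
    have hB : |∑ j ∈ Finset.Icc (J₁+1) J, -(θ j * α j * Real.sin (θ j * y))|
        ≤ ∑ j ∈ Finset.Icc (J₁+1) J, θ j * |α j| := by
      refine (Finset.abs_sum_le_sum_abs _ _).trans ?_
      refine Finset.sum_le_sum fun j hj => ?_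
      rw [abs_neg, abs_mul, abs_mul, abs_of_pos (hθpos j hj)]
      calc θ j * |α j| * |Real.sin (θ j * y)| ≤ θ j * |α j| * 1 := by
            exact mul_le_mul_of_nonneg_left (Real.abs_sin_le_one _)
              (mul_nonneg (le_of_lt (hθpos j hj)) (abs_nonneg _))
        _ = θ j * |α j| := mul_one _
    have hC : |∫ x, β' (y - x) * p x| ≤ Bβ' := by
      have iC : Integrable (fun x => β' (y - x) * p x) :=
        auxLDB_conv_int p hpInt β' hβ'cont Cβ' hCβ' y
      calc |∫ x, β' (y - x) * p x| ≤ ∫ x, |β' (y - x) * p x| := by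
            simpa only [Real.norm_eq_abs] using
              norm_integral_le_integral_norm (μ := (volume : Measure ℝ))
                (fun x => β' (y - x) * p x)
        _ ≤ ∫ x, Bβ' * p x := by
            refine integral_mono iC.abs (hpInt.const_mul _) fun x => ?_
            rw [abs_mul, abs_of_nonneg (hpnonneg x)]
            exact mul_le_mul_of_nonneg_right (hbB _) (hpnonneg x)
        _ = Bβ' := by rw [integral_const_mul, hpint, mul_one]
    calc |_| ≤ |∑ j ∈ Finset.Icc 1 J₁, 2*(j:ℝ) * α j * y^(2*j-1)|
          + |(∑ j ∈ Finset.Icc (J₁+1) J, -(θ j * α j * Real.sin (θ j * y)))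
            + ∫ x, β' (y - x) * p x| := abs_add_le _ _
      _ ≤ |∑ j ∈ Finset.Icc 1 J₁, 2*(j:ℝ) * α j * y^(2*j-1)|
          + (|∑ j ∈ Finset.Icc (J₁+1) J, -(θ j * α j * Real.sin (θ j * y))|
            + |∫ x, β' (y - x) * p x|) := by
            exact add_le_add_right (abs_add_le _ _) _
      _ ≤ 2 * (∑ j ∈ Finset.Icc 1 J₁, (j : ℝ) * |α j| * |y| ^ (2 * j - 1))
          + ((∑ j ∈ Finset.Icc (J₁+1) J, θ j * |α j|) + Bβ') :=
            add_le_add hA (add_le_add hB hC)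
      _ = 2 * (∑ j ∈ Finset.Icc 1 J₁, (j : ℝ) * |α j| * |y| ^ (2 * j - 1))
          + (∑ j ∈ Finset.Icc (J₁+1) J, θ j * |α j|) + Bβ' := by ring
  -- conclusion
  intro y
  have heq : pd y / p y = -∫ x, φd (y - x) * p x := by
    rw [hpdval y, hD y, mul_comm, mul_div_assoc, div_self (hpn0 y), mul_one]
  refine ⟨?_, heq, ?_⟩
  · rw [hD y]
    exact hbound y
  · rw [heq, hD y, abs_neg]
    exact hbound y
end
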